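/- Let k be a field of characteristic 2 with ι on S = k[x_1,y_1,…,x_g,y_g] given by x_i ↦ x_i, y_i ↦ y_i + x_i. For subsets A, B ⊆ {1,…,g}, the identity Tr(y_A)·Tr(y_B) = ∑_{L ⊊ A∩B} x_{(A∩B)∖L} N(y_L) Tr(y_{(A∪B)∖L}) + N(y_{A∩B}) ∑_{M ⊊ A∖B} x_{(A∖B)∖M} Tr(y_{M ∪ (B∖A)}) holds in S, where x_M = ∏_{i∈M} x_i, y_M = ∏_{i∈M} y_i, N(f) = f·ι(f), Tr(f) = f + ι(f). -/
import Mathlib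


open MvPolynomial

open Finset in

lemma stmt17core {R : Type*} [CommRing R] {g : ℕ} (h2 : ∀ a : R, a + a = 0)
    (u x : Fin g → R) (C D E : Finset (Fin g))
    (hCD : Disjoint C D) (hCE : Disjoint C E) (hDE : Disjoint D E) :
    ((∏ i ∈ C, u i) * ∏ i ∈ D, u i + (∏ i ∈ C, (u i + x i)) * ∏ i ∈ D, (u i + x i)) *
      ((∏ i ∈ C, u i) * ∏ i ∈ E, u i + (∏ i ∈ C, (u i + x i)) * ∏ i ∈ E, (u i + x i)) =
    (∑ L ∈ C.powerset, (∏ i ∈ C \ L, x i) * ((∏ i ∈ L, u i) * ∏ i ∈ L, (u i + x i)) *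
        ((∏ i ∈ (C ∪ D ∪ E) \ L, u i) + ∏ i ∈ (C ∪ D ∪ E) \ L, (u i + x i)))
    + ((∏ i ∈ C, u i) * ∏ i ∈ C, (u i + x i)) *
      ∑ M ∈ D.powerset, (∏ i ∈ D \ M, x i) *
        ((∏ i ∈ M ∪ E, u i) + ∏ i ∈ M ∪ E, (u i + x i)) := by
  classical
  have hsplit : ∀ (w : Fin g → R) (L : Finset (Fin g)), L ⊆ C →
      ∏ i ∈ (C ∪ D ∪ E) \ L, w i
        = (∏ i ∈ C \ L, w i) * (∏ i ∈ D, w i) * ∏ i ∈ E, w i := by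
    intro w L hL
    have h1 : (C ∪ D ∪ E) \ L = (C \ L) ∪ D ∪ E := by
      have hLD : ∀ a ∈ D, a ∉ L := fun a ha hal =>
        (Finset.disjoint_left.1 hCD) (hL hal) ha
      have hLE : ∀ a ∈ E, a ∉ L := fun a ha hal =>
        (Finset.disjoint_left.1 hCE) (hL hal) ha
      ext a
      have hA : a ∈ C → a ∉ D := fun h => Finset.disjoint_left.1 hCD h
      have hB : a ∈ C → a ∉ E := fun h => Finset.disjoint_left.1 hCE h
      have hC' : a ∈ L → a ∈ C := fun h => hL h
      simp only [mem_union, mem_sdiff]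
      tauto
    have d1 : Disjoint (C \ L) D := hCD.mono_left sdiff_subset
    have d2 : Disjoint (C \ L ∪ D) E :=
      disjoint_union_left.2 ⟨hCE.mono_left sdiff_subset, hDE⟩
    rw [h1, prod_union d2, prod_union d1]
  -- rewrite each summand of the first sum
  have hsum1 : (∑ L ∈ C.powerset, (∏ i ∈ C \ L, x i) *
        ((∏ i ∈ L, u i) * ∏ i ∈ L, (u i + x i)) *
        ((∏ i ∈ (C ∪ D ∪ E) \ L, u i) + ∏ i ∈ (C ∪ D ∪ E) \ L, (u i + x i)))
      = (∏ i ∈ C, (u i * u i)) * ((∏ i ∈ D, u i) * ∏ i ∈ E, u i)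
        + (∏ i ∈ C, ((u i + x i) * (u i + x i))) *
          ((∏ i ∈ D, (u i + x i)) * ∏ i ∈ E, (u i + x i)) := by
    have step : ∀ L ∈ C.powerset, (∏ i ∈ C \ L, x i) *
        ((∏ i ∈ L, u i) * ∏ i ∈ L, (u i + x i)) *
        ((∏ i ∈ (C ∪ D ∪ E) \ L, u i) + ∏ i ∈ (C ∪ D ∪ E) \ L, (u i + x i))
        = ((∏ i ∈ L, (u i * (u i + x i))) * ∏ i ∈ C \ L, (x i * u i)) *
            ((∏ i ∈ D, u i) * ∏ i ∈ E, u i)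
          + ((∏ i ∈ L, (u i * (u i + x i))) * ∏ i ∈ C \ L, (x i * (u i + x i))) *
            ((∏ i ∈ D, (u i + x i)) * ∏ i ∈ E, (u i + x i)) := by
      intro L hL
      rw [hsplit u L (mem_powerset.1 hL), hsplit (fun i => u i + x i) L (mem_powerset.1 hL),
        prod_mul_distrib, prod_mul_distrib, prod_mul_distrib]
      ring
    rw [Finset.sum_congr rfl step, Finset.sum_add_distrib, ← Finset.sum_mul, ← Finset.sum_mul,
      ← Finset.prod_add, ← Finset.prod_add]
    have hp1 : ∏ i ∈ C, (u i * (u i + x i) + x i * u i) = ∏ i ∈ C, (u i * u i) :=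
      Finset.prod_congr rfl fun i _ => by linear_combination h2 (u i * x i)
    have hp2 : ∏ i ∈ C, (u i * (u i + x i) + x i * (u i + x i))
        = ∏ i ∈ C, ((u i + x i) * (u i + x i)) :=
      Finset.prod_congr rfl fun i _ => by ring
    rw [hp1, hp2]
  have hsum2 : (∑ M ∈ D.powerset, (∏ i ∈ D \ M, x i) *
        ((∏ i ∈ M ∪ E, u i) + ∏ i ∈ M ∪ E, (u i + x i)))
      = (∏ i ∈ D, (u i + x i)) * ∏ i ∈ E, u i
        + (∏ i ∈ D, u i) * ∏ i ∈ E, (u i + x i) := by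
    have step : ∀ M ∈ D.powerset, (∏ i ∈ D \ M, x i) *
        ((∏ i ∈ M ∪ E, u i) + ∏ i ∈ M ∪ E, (u i + x i))
        = ((∏ i ∈ M, u i) * ∏ i ∈ D \ M, x i) * ∏ i ∈ E, u i
          + ((∏ i ∈ M, (u i + x i)) * ∏ i ∈ D \ M, x i) * ∏ i ∈ E, (u i + x i) := by
      intro M hM
      have dME : Disjoint M E := hDE.mono_left (mem_powerset.1 hM)
      rw [prod_union dME, prod_union dME]
      ring
    rw [Finset.sum_congr rfl step, Finset.sum_add_distrib, ← Finset.sum_mul, ← Finset.sum_mul,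
      ← Finset.prod_add, ← Finset.prod_add]
    have hp : ∏ i ∈ D, (u i + x i + x i) = ∏ i ∈ D, u i :=
      Finset.prod_congr rfl fun i _ => by linear_combination h2 (x i)
    rw [hp]
  rw [hsum1, hsum2, Finset.prod_mul_distrib, Finset.prod_mul_distrib]
  ring

open Finset in
/-- Campbell–Wehlau relation (ii): Over a field `k` of
characteristic 2, with `ι` on `k[x₁,y₁,…,x_g,y_g]` given by `xᵢ ↦ xᵢ`,
`yᵢ ↦ yᵢ + xᵢ`, `Tr(f) = f + ι(f)`, `N(f) = f·ι(f)`, and `y_M = ∏_{i∈M} yᵢ`,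
`x_M = ∏_{i∈M} xᵢ`: for all `A, B ⊆ {1,…,g}`,
`Tr(y_A)Tr(y_B) = ∑_{L⊊A∩B} x_{(A∩B)∖L} N(y_L) Tr(y_{(A∪B)∖L})
  + N(y_{A∩B}) ∑_{M⊊A∖B} x_{(A∖B)∖M} Tr(y_{M∪(B∖A)})`.
Variables: `X (i, false) = xᵢ`, `X (i, true) = yᵢ`. -/
theorem stmt17 (k : Type*) [Field k] [CharP k 2] (g : ℕ)
    (ι : MvPolynomial (Fin g × Bool) k →ₐ[k] MvPolynomial (Fin g × Bool) k)
    (hι : ι = aeval (fun v : Fin g × Bool =>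
      if v.2 then X v + X (v.1, false) else X v))
    (Tr N : MvPolynomial (Fin g × Bool) k → MvPolynomial (Fin g × Bool) k)
    (hTr : ∀ f, Tr f = f + ι f) (hN : ∀ f, N f = f * ι f)
    (A B : Finset (Fin g)) :
    Tr (∏ i ∈ A, X (i, true)) * Tr (∏ i ∈ B, X (i, true)) =
      (∑ L ∈ (A ∩ B).powerset.filter (· ≠ A ∩ B),
        (∏ i ∈ (A ∩ B) \ L, X (i, false)) * N (∏ i ∈ L, X (i, true))
          * Tr (∏ i ∈ (A ∪ B) \ L, X (i, true)))
      + N (∏ i ∈ A ∩ B, X (i, true)) *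
        ∑ M ∈ (A \ B).powerset.filter (· ≠ A \ B),
          (∏ i ∈ (A \ B) \ M, X (i, false))
            * Tr (∏ i ∈ M ∪ (B \ A), X (i, true)) := by
  classical
  have h2 : ∀ a : MvPolynomial (Fin g × Bool) k, a + a = 0 := by
    intro a
    have hk : (2 : k) = 0 := by exact_mod_cast CharP.cast_eq_zero k 2
    rw [← two_mul, ← map_ofNat (C : k →+* MvPolynomial (Fin g × Bool) k) 2, hk, map_zero,
      zero_mul]
  have hιy : ∀ S : Finset (Fin g),
      ι (∏ i ∈ S, X (i, true)) = ∏ i ∈ S, (X (i, true) + X (i, false)) := by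
    intro S
    rw [hι, map_prod]
    exact Finset.prod_congr rfl fun i _ => by simp
  simp only [hTr, hN, hιy]
  have hfilt : ∀ (s : Finset (Fin g)) (f : Finset (Fin g) → MvPolynomial (Fin g × Bool) k),
      ∑ L ∈ s.powerset.filter (· ≠ s), f L = (∑ L ∈ s.powerset, f L) + f s := by
    intro s f
    have h := Finset.sum_erase_add s.powerset f (Finset.mem_powerset_self s)
    rw [Finset.filter_ne']
    linear_combination h - h2 (f s)
  rw [hfilt, hfilt]
  have hU' : A ∪ B = (A ∩ B) ∪ (A \ B) ∪ (B \ A) := by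
    ext a; simp only [mem_union, mem_inter, mem_sdiff]; tauto
  simp only [hU', Finset.sdiff_self, Finset.prod_empty, one_mul]
  have hXC : ((A ∩ B) ∪ (A \ B) ∪ (B \ A)) \ (A ∩ B) = (A \ B) ∪ (B \ A) := by
    ext a; simp only [mem_union, mem_inter, mem_sdiff]; tauto
  rw [hXC]
  rw [← Finset.prod_inter_mul_prod_diff A B (fun i => X ((i : Fin g), true)),
    ← Finset.prod_inter_mul_prod_diff A B (fun i => X ((i : Fin g), true) + X (i, false)),
    ← Finset.prod_inter_mul_prod_diff B A (fun i => X ((i : Fin g), true)),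
    ← Finset.prod_inter_mul_prod_diff B A (fun i => X ((i : Fin g), true) + X (i, false)),
    Finset.inter_comm B A]
  have dCD : Disjoint (A ∩ B) (A \ B) := (Finset.disjoint_sdiff_inter A B).symm
  have dCE : Disjoint (A ∩ B) (B \ A) := by
    rw [Finset.inter_comm]; exact (Finset.disjoint_sdiff_inter B A).symm
  have dDE : Disjoint (A \ B) (B \ A) :=
    Finset.disjoint_left.2 fun a h1 h2 => (Finset.mem_sdiff.1 h2).2 (Finset.mem_sdiff.1 h1).1
  have hcore := stmt17core h2 (fun i => X ((i : Fin g), true)) (fun i => X ((i : Fin g), false))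
    (A ∩ B) (A \ B) (B \ A) dCD dCE dDE
  linear_combination hcore - h2 (((∏ i ∈ A ∩ B, X ((i : Fin g), true)) *
      ∏ i ∈ A ∩ B, (X ((i : Fin g), true) + X (i, false))) *
    ((∏ i ∈ (A \ B) ∪ (B \ A), X ((i : Fin g), true)) +
      ∏ i ∈ (A \ B) ∪ (B \ A), (X ((i : Fin g), true) + X (i, false))))
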